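/- Let G (resp. F) be the space of lower semicontinuous functions from a Hausdorff topological space X (resp. Y) to [-∞,∞]. Then every order isomorphism J : F → G is of the form Jf(x) = g(x, f(φ(x))), where φ : X → Y is a homeomorphism and g : X × [-∞,∞] → [-∞,∞] is jointly lower semicontinuous with g(x,·) bijective and increasing for each x, whose pointwise inverse g¹(x,·) is also jointly lower semicontinuous in (x, t). -/

import Mathlib

open Filter Topology Set

namespace Stmt11Aux

noncomputable section

attribute [local instance] Classical.propDecidable

variable {X Y : Type*} [TopologicalSpace X] [TopologicalSpace Y]

/-- The "point function": value `t` at `y`, `⊤` elsewhere. -/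
def dl (y : Y) (t : EReal) : Y → EReal := fun z => if z = y then t else ⊤

lemma dl_self (y : Y) (t : EReal) : dl y t y = t := if_pos rfl

lemma dl_ne {y z : Y} (h : z ≠ y) (t : EReal) : dl y t z = ⊤ := if_neg h

lemma lsc_dl [T1Space Y] (y : Y) (t : EReal) : LowerSemicontinuous (dl y t) := by
  intro z c hc
  by_cases hz : z = y
  · rw [hz, dl_self] at hc
    refine Eventually.of_forall fun w => ?_
    show dl y t w > c
    by_cases hw : w = y
    · rw [hw, dl_self]; exact hc
    · rw [dl_ne hw]; exact lt_of_lt_of_le hc le_top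
  · have hmem : {w | w ≠ y} ∈ 𝓝 z := isOpen_ne.mem_nhds hz
    filter_upwards [hmem] with w hw
    rw [dl_ne hw]
    rw [dl_ne hz] at hc
    exact hc

lemma le_dl_iff {F : Y → EReal} {y : Y} {t : EReal} : F ≤ dl y t ↔ F y ≤ t := by
  constructor
  · intro h; have := h y; rwa [dl_self] at this
  · intro h z
    by_cases hz : z = y
    · subst hz; rwa [dl_self]
    · rw [dl_ne hz]; exact le_top

lemma dl_mono {y : Y} {t t' : EReal} (h : t ≤ t') : dl y t ≤ dl y t' := by
  intro z; by_cases hz : z = y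
  · subst hz; rw [dl_self, dl_self]; exact h
  · rw [dl_ne hz, dl_ne hz]

lemma dl_eq_dl {y y' : Y} {s s' : EReal} (h : dl y s = dl y' s') (hs : s ≠ ⊤) :
    y = y' ∧ s = s' := by
  have h1 := congrFun h y
  rw [dl_self] at h1
  by_cases hyy : y = y'
  · subst hyy; rw [dl_self] at h1; exact ⟨rfl, h1⟩
  · rw [dl_ne hyy] at h1; exact absurd h1 hs

lemma lsc_min {f g : Y → EReal} (hf : LowerSemicontinuous f) (hg : LowerSemicontinuous g) :
    LowerSemicontinuous (fun z => min (f z) (g z)) := by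
  intro z c hc
  rcases lt_min_iff.1 hc with ⟨h1, h2⟩
  filter_upwards [hf z c h1, hg z c h2] with w hw1 hw2
  exact lt_min hw1 hw2

/-- Bundled order isomorphism between lsc functions on `Y` and lsc functions on `X`. -/
structure OI (X Y : Type*) [TopologicalSpace X] [TopologicalSpace Y] where
  J : (Y → EReal) → (X → EReal)
  J' : (X → EReal) → (Y → EReal)
  lscJ : ∀ f, LowerSemicontinuous f → LowerSemicontinuous (J f)
  lscJ' : ∀ h, LowerSemicontinuous h → LowerSemicontinuous (J' h)
  linv : ∀ f, LowerSemicontinuous f → J' (J f) = f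
  rinv : ∀ h, LowerSemicontinuous h → J (J' h) = h
  mono : ∀ f g, LowerSemicontinuous f → LowerSemicontinuous g → f ≤ g → J f ≤ J g
  mono' : ∀ f g, LowerSemicontinuous f → LowerSemicontinuous g → f ≤ g → J' f ≤ J' g

def OI.symm (E : OI X Y) : OI Y X :=
  ⟨E.J', E.J, E.lscJ', E.lscJ, E.rinv, E.linv, E.mono', E.mono⟩

@[simp] lemma OI.symm_symm (E : OI X Y) : E.symm.symm = E := rfl
@[simp] lemma OI.symm_J (E : OI X Y) : E.symm.J = E.J' := rfl
@[simp] lemma OI.symm_J' (E : OI X Y) : E.symm.J' = E.J := rfl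

lemma OI.map_top (E : OI X Y) : E.J (fun _ => ⊤) = fun _ => ⊤ := by
  apply le_antisymm
  · intro x; exact le_top
  · have h1 : E.J' (fun _ => ⊤) ≤ (fun _ => ⊤) := fun y => le_top
    have h2 := E.mono _ _ (E.lscJ' _ lowerSemicontinuous_const) lowerSemicontinuous_const h1
    rw [E.rinv _ lowerSemicontinuous_const] at h2
    exact h2

lemma OI.map_min (E : OI X Y) {G H : X → EReal} (hG : LowerSemicontinuous G)
    (hH : LowerSemicontinuous H) :
    E.J' (fun z => min (G z) (H z)) = fun y => min (E.J' G y) (E.J' H y) := by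
  apply le_antisymm
  · intro y
    refine le_min ?_ ?_
    · exact E.mono' _ _ (lsc_min hG hH) hG (fun z => min_le_left _ _) y
    · exact E.mono' _ _ (lsc_min hG hH) hH (fun z => min_le_right _ _) y
  · set k := fun y => min (E.J' G y) (E.J' H y) with hk
    have hklsc : LowerSemicontinuous k := lsc_min (E.lscJ' _ hG) (E.lscJ' _ hH)
    have h1 : E.J k ≤ G := by
      have := E.mono _ _ hklsc (E.lscJ' _ hG) (fun y => min_le_left _ _)
      rwa [E.rinv _ hG] at this
    have h2 : E.J k ≤ H := by
      have := E.mono _ _ hklsc (E.lscJ' _ hH) (fun y => min_le_right _ _)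
      rwa [E.rinv _ hH] at this
    have h3 : E.J k ≤ fun z => min (G z) (H z) := fun z => le_min (h1 z) (h2 z)
    have h4 := E.mono' _ _ (E.lscJ _ hklsc) (lsc_min hG hH) h3
    rwa [E.linv _ hklsc] at h4

variable [T2Space X] [T2Space Y]

/-- `J` maps point functions to point functions. -/
lemma OI.point (E : OI X Y) (y : Y) (t : EReal) (ht : t ≠ ⊤) :
    ∃ x s, s ≠ ⊤ ∧ E.J (dl y t) = dl x s := by
  set F := E.J (dl y t) with hF
  have hFlsc : LowerSemicontinuous F := E.lscJ _ (lsc_dl y t)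
  have hFne : ¬ ∀ x, F x = ⊤ := by
    intro hall
    have hFt : F = fun _ => ⊤ := funext hall
    have h2 : dl y t = E.J' (fun _ => ⊤) := by
      rw [← hFt, hF, E.linv _ (lsc_dl y t)]
    have h3 : E.J' (fun _ => ⊤) = fun _ => ⊤ := E.symm.map_top
    rw [h3] at h2
    exact ht (by rw [← dl_self y t, h2])
  have huniq : ∀ x₁ x₂, F x₁ ≠ ⊤ → F x₂ ≠ ⊤ → x₁ = x₂ := by
    intro x₁ x₂ hx1 hx2
    by_contra hne
    obtain ⟨U, V, hU, hV, hxU, hxV, hUV⟩ := t2_separation hne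
    set G := fun z => if z ∈ U then (⊤ : EReal) else F z with hGdef
    set H := fun z => if z ∈ V then (⊤ : EReal) else F z with hHdef
    have hFG : F ≤ G := by
      intro z; by_cases h : z ∈ U
      · simp only [hGdef, if_pos h]; exact le_top
      · simp only [hGdef, if_neg h]; exact le_rfl
    have hFH : F ≤ H := by
      intro z; by_cases h : z ∈ V
      · simp only [hHdef, if_pos h]; exact le_top
      · simp only [hHdef, if_neg h]; exact le_rfl
    have hGlsc : LowerSemicontinuous G := by
      intro z c hc
      by_cases hz : z ∈ U
      · filter_upwards [hU.mem_nhds hz] with w hw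
        simp only [hGdef, if_pos hw]
        exact lt_of_lt_of_le hc le_top
      · simp only [hGdef, if_neg hz] at hc
        filter_upwards [hFlsc z c hc] with w hw
        exact lt_of_lt_of_le hw (hFG w)
    have hHlsc : LowerSemicontinuous H := by
      intro z c hc
      by_cases hz : z ∈ V
      · filter_upwards [hV.mem_nhds hz] with w hw
        simp only [hHdef, if_pos hw]
        exact lt_of_lt_of_le hc le_top
      · simp only [hHdef, if_neg hz] at hc
        filter_upwards [hFlsc z c hc] with w hw
        exact lt_of_lt_of_le hw (hFH w)
    have hmin : (fun z => min (G z) (H z)) = F := by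
      funext z
      by_cases h : z ∈ U
      · have hzv : z ∉ V := Set.disjoint_left.1 hUV h
        simp only [hGdef, hHdef, if_pos h, if_neg hzv]
        exact min_eq_right le_top
      · simp only [hGdef, hHdef, if_neg h]
        exact min_eq_left (hFH z)
    have key : dl y t = fun w => min (E.J' G w) (E.J' H w) := by
      rw [← E.map_min hGlsc hHlsc, hmin, hF, E.linv _ (lsc_dl y t)]
    have htop : ∀ w, w ≠ y → E.J' G w = ⊤ ∧ E.J' H w = ⊤ := by
      intro w hw
      have hkw := congrFun key w
      rw [dl_ne hw] at hkw
      constructor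
      · exact top_le_iff.1 (le_trans hkw.le (min_le_left _ _))
      · exact top_le_iff.1 (le_trans hkw.le (min_le_right _ _))
    have hky := congrFun key y
    rw [dl_self] at hky
    have hcase : E.J' G y = t ∨ E.J' H y = t := by
      rcases min_choice (E.J' G y) (E.J' H y) with h | h
      · exact Or.inl (by rw [← h]; exact hky.symm)
      · exact Or.inr (by rw [← h]; exact hky.symm)
    rcases hcase with h | h
    · have hGdl : E.J' G = dl y t := by
        funext w
        by_cases hw : w = y
        · subst hw; rw [dl_self]; exact h
        · rw [dl_ne hw]; exact (htop w hw).1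
      have hGF : G = F := by
        calc G = E.J (E.J' G) := (E.rinv G hGlsc).symm
        _ = E.J (dl y t) := by rw [hGdl]
        _ = F := hF.symm
      apply hx1
      rw [← hGF]
      simp only [hGdef, if_pos hxU]
    · have hHdl : E.J' H = dl y t := by
        funext w
        by_cases hw : w = y
        · subst hw; rw [dl_self]; exact h
        · rw [dl_ne hw]; exact (htop w hw).2
      have hHF : H = F := by
        calc H = E.J (E.J' H) := (E.rinv H hHlsc).symm
        _ = E.J (dl y t) := by rw [hHdl]
        _ = F := hF.symm
      apply hx2
      rw [← hHF]
      simp only [hHdef, if_pos hxV]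
  push_neg at hFne
  obtain ⟨x, hx⟩ := hFne
  refine ⟨x, F x, hx, ?_⟩
  funext z
  by_cases hz : z = x
  · subst hz; rw [dl_self]
  · rw [dl_ne hz]
    by_contra h
    exact hz (huniq z x h hx)

/-- The point map induced by `J`. -/
def OI.pt (E : OI X Y) (y : Y) : X := (E.point y ⊥ bot_ne_top).choose

lemma OI.point_pt (E : OI X Y) (y : Y) {t : EReal} (ht : t ≠ ⊤) :
    ∃ s, s ≠ ⊤ ∧ E.J (dl y t) = dl (E.pt y) s := by
  obtain ⟨x', s', hs', hE⟩ := E.point y t ht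
  obtain ⟨s0, hs0, hE0'⟩ := (E.point y ⊥ bot_ne_top).choose_spec
  have hE0 : E.J (dl y ⊥) = dl (E.pt y) s0 := hE0'
  have hle : dl y ⊥ ≤ dl y t := dl_mono bot_le
  have hmono := E.mono _ _ (lsc_dl _ _) (lsc_dl _ _) hle
  rw [hE0, hE] at hmono
  have hxx : E.pt y = x' := by
    by_contra hne
    have h2 := hmono x'
    rw [dl_self, dl_ne (fun h => hne h.symm)] at h2
    exact hs' (top_le_iff.1 h2)
  exact ⟨s', hs', by rw [hE, hxx]⟩

lemma OI.pt_pt (E : OI X Y) (y : Y) : E.symm.pt (E.pt y) = y := by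
  obtain ⟨s, hs, hE⟩ := E.point_pt y (bot_ne_top : (⊥ : EReal) ≠ ⊤)
  obtain ⟨s₂, hs₂, hE₂⟩ := E.symm.point_pt (E.pt y) hs
  have h : E.J' (dl (E.pt y) s) = dl y ⊥ := by rw [← hE, E.linv _ (lsc_dl _ _)]
  have h2 : dl (E.symm.pt (E.pt y)) s₂ = dl y ⊥ := by rw [← hE₂]; exact h
  exact (dl_eq_dl h2 hs₂).1

/-- The fiber maps induced by `J`. -/
def OI.gg (E : OI X Y) (x : X) (t : EReal) : EReal :=
  if t = ⊤ then ⊤ else E.J (dl (E.symm.pt x) t) x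

lemma OI.gg_top (E : OI X Y) (x : X) : E.gg x ⊤ = ⊤ := if_pos rfl

lemma OI.gg_of_ne (E : OI X Y) (x : X) {t : EReal} (ht : t ≠ ⊤) :
    E.gg x t = E.J (dl (E.symm.pt x) t) x := if_neg ht

lemma OI.J_dl (E : OI X Y) (x : X) {t : EReal} (ht : t ≠ ⊤) :
    E.J (dl (E.symm.pt x) t) = dl x (E.gg x t) ∧ E.gg x t ≠ ⊤ := by
  obtain ⟨s, hs, hE⟩ := E.point_pt (E.symm.pt x) ht
  have hpx : E.pt (E.symm.pt x) = x := E.symm.pt_pt x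
  rw [hpx] at hE
  have hgg : E.gg x t = s := by
    rw [E.gg_of_ne x ht, hE, dl_self]
  rw [hgg]; exact ⟨hE, hs⟩

lemma OI.gg_mono (E : OI X Y) (x : X) : Monotone (E.gg x) := by
  intro t t' h
  by_cases ht' : t' = ⊤
  · subst ht'; rw [E.gg_top]; exact le_top
  · have ht : t ≠ ⊤ := fun h'' => ht' (top_le_iff.1 (h'' ▸ h))
    rw [E.gg_of_ne x ht, E.gg_of_ne x ht']
    exact E.mono _ _ (lsc_dl _ _) (lsc_dl _ _) (dl_mono h) x

lemma OI.gg_left_inv (E : OI X Y) (x : X) (t : EReal) :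
    E.symm.gg (E.symm.pt x) (E.gg x t) = t := by
  by_cases ht : t = ⊤
  · subst ht; rw [E.gg_top, OI.gg_top]
  · obtain ⟨hE, hs⟩ := E.J_dl x ht
    rw [E.symm.gg_of_ne _ hs, E.symm.pt_pt x, OI.symm_J, ← hE,
      E.linv _ (lsc_dl _ _), dl_self]

lemma OI.gg_right_inv (E : OI X Y) (x : X) (t : EReal) :
    E.gg x (E.symm.gg (E.symm.pt x) t) = t := by
  have h := E.symm.gg_left_inv (E.symm.pt x) t
  have hpx : E.symm.symm.pt (E.symm.pt x) = x := E.symm.pt_pt x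
  rw [hpx] at h
  exact h

lemma OI.gg_bot (E : OI X Y) (x : X) : E.gg x ⊥ = ⊥ := by
  have h := E.gg_mono x (bot_le : (⊥ : EReal) ≤ E.symm.gg (E.symm.pt x) ⊥)
  rw [E.gg_right_inv x ⊥] at h
  exact le_bot_iff.1 h

lemma OI.gg_lt (E : OI X Y) (x : X) {t t' : EReal} (h : t < t') :
    E.gg x t < E.gg x t' := by
  refine lt_of_le_of_ne (E.gg_mono x h.le) fun heq => h.ne ?_
  have h1 := E.gg_left_inv x t
  have h2 := E.gg_left_inv x t'
  rw [heq] at h1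
  exact h1.symm.trans h2

lemma OI.le_formula (E : OI X Y) {f : Y → EReal} (hf : LowerSemicontinuous f) (x : X) :
    E.J f x ≤ E.gg x (f (E.symm.pt x)) := by
  set y := E.symm.pt x with hy
  by_cases ht : f y = ⊤
  · rw [ht, E.gg_top]; exact le_top
  · have h1 : f ≤ dl y (f y) := le_dl_iff.2 le_rfl
    have h2 := E.mono _ _ hf (lsc_dl _ _) h1 x
    rw [(E.J_dl x ht).1, dl_self] at h2
    exact h2

lemma OI.formula (E : OI X Y) {f : Y → EReal} (hf : LowerSemicontinuous f) (x : X) :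
    E.J f x = E.gg x (f (E.symm.pt x)) := by
  refine le_antisymm (E.le_formula hf x) ?_
  have h1 := E.symm.le_formula (E.lscJ f hf) (E.symm.pt x)
  rw [E.symm.pt_pt x] at h1
  have h1' : f (E.symm.pt x) ≤ E.symm.gg (E.symm.pt x) (E.J f x) := by
    rw [show E.symm.J (E.J f) = f from E.linv f hf] at h1
    exact h1
  have h2 := E.gg_mono x h1'
  rwa [E.gg_right_inv x (E.J f x)] at h2

lemma crit_a {A : Set Y} {y : Y} (hy : y ∈ closure A) {F : Y → EReal}
    (hF : LowerSemicontinuous F) (hA : ∀ a ∈ A, F a = ⊥) : F y = ⊥ := by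
  by_contra h
  have hlt : (⊥ : EReal) < F y := bot_lt_iff_ne_bot.2 h
  have hev := hF y ⊥ hlt
  have hfreq := mem_closure_iff_frequently.1 hy
  obtain ⟨a, ha, hFa⟩ := (hfreq.and_eventually hev).exists
  rw [hA a ha] at hFa
  exact lt_irrefl _ hFa

lemma crit_b {A : Set Y} {y : Y}
    (h : ∀ F : Y → EReal, LowerSemicontinuous F → (∀ a ∈ A, F a = ⊥) → F y = ⊥) :
    y ∈ closure A := by
  by_contra hy
  set F : Y → EReal := fun z => if z ∈ closure A then ⊥ else ⊤ with hFdef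
  have hFlsc : LowerSemicontinuous F := by
    intro z c hc
    by_cases hz : z ∈ closure A
    · simp only [hFdef, if_pos hz] at hc
      exact absurd hc not_lt_bot
    · filter_upwards [isClosed_closure.isOpen_compl.mem_nhds hz] with w hw
      simp only [hFdef, if_neg hw]
      simp only [hFdef, if_neg hz] at hc
      exact hc
  have hb := h F hFlsc fun a ha => by simp only [hFdef, if_pos (subset_closure ha)]
  simp only [hFdef, if_neg hy] at hb
  exact top_ne_bot hb

lemma OI.bot_iff (E : OI X Y) {F : Y → EReal} (hF : LowerSemicontinuous F) (y : Y) :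
    F y = ⊥ ↔ E.J F (E.pt y) = ⊥ := by
  have hdl : E.J (dl y ⊥) = dl (E.pt y) ⊥ := by
    have h := (E.J_dl (E.pt y) (bot_ne_top : (⊥ : EReal) ≠ ⊤)).1
    rw [E.pt_pt y, E.gg_bot] at h
    exact h
  constructor
  · intro h
    have h1 : F ≤ dl y ⊥ := le_dl_iff.2 h.le
    have h2 := E.mono _ _ hF (lsc_dl _ _) h1 (E.pt y)
    rw [hdl, dl_self] at h2
    exact le_bot_iff.1 h2
  · intro h
    have h1 : E.J F ≤ dl (E.pt y) ⊥ := le_dl_iff.2 h.le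
    have h2 := E.mono' _ _ (E.lscJ _ hF) (lsc_dl _ _) h1
    rw [E.linv _ hF] at h2
    have h3 : E.J' (dl (E.pt y) ⊥) = dl y ⊥ := by
      rw [← hdl, E.linv _ (lsc_dl _ _)]
    rw [h3] at h2
    exact le_bot_iff.1 (le_dl_iff.1 h2)

lemma OI.pt_continuous (E : OI X Y) : Continuous (E.pt : Y → X) := by
  rw [continuous_iff_isClosed]
  intro C hC
  refine isClosed_of_closure_subset fun y hy => ?_
  show E.pt y ∈ C
  rw [← hC.closure_eq]
  apply crit_b
  intro G hG hGC
  set F := E.J' G with hFdef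
  have hFlsc : LowerSemicontinuous F := E.lscJ' G hG
  have hJF : E.J F = G := E.rinv G hG
  have hbot : ∀ a ∈ E.pt ⁻¹' C, F a = ⊥ := by
    intro a ha
    rw [E.bot_iff hFlsc a, hJF]
    exact hGC _ ha
  have hFy := crit_a hy hFlsc hbot
  have h2 := (E.bot_iff hFlsc y).1 hFy
  rwa [hJF] at h2

lemma OI.gg_const_lsc (E : OI X Y) (c : EReal) :
    LowerSemicontinuous fun x => E.gg x c := by
  have h : (fun x => E.gg x c) = E.J (fun _ => c) := by
    funext x
    rw [E.formula lowerSemicontinuous_const x]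
  rw [h]
  exact E.lscJ _ lowerSemicontinuous_const

lemma OI.gg_joint_lsc (E : OI X Y) :
    LowerSemicontinuous (fun p : X × EReal => E.gg p.1 p.2) := by
  have key : ∀ p : X × EReal,
      E.gg p.1 p.2 = ⨆ q : ℚ, if ((q : ℝ) : EReal) < p.2 then E.gg p.1 ((q : ℝ) : EReal) else ⊥ := by
    rintro ⟨x, t⟩
    apply le_antisymm
    · by_contra hlt
      push_neg at hlt
      set S := ⨆ q : ℚ, if ((q : ℝ) : EReal) < t then E.gg x ((q : ℝ) : EReal) else ⊥ with hS
      set s := E.symm.gg (E.symm.pt x) S with hs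
      have hgs : E.gg x s = S := E.gg_right_inv x S
      have hst : s < t := by
        by_contra hge
        push_neg at hge
        have h := E.gg_mono x hge
        rw [hgs] at h
        exact absurd (lt_of_le_of_lt h hlt) (lt_irrefl _)
      obtain ⟨q, hq1, hq2⟩ := EReal.exists_rat_btwn_of_lt hst
      have hterm : (if ((q : ℝ) : EReal) < t then E.gg x ((q : ℝ) : EReal) else ⊥) ≤ S :=
        le_iSup (fun q : ℚ => if ((q : ℝ) : EReal) < t then E.gg x ((q : ℝ) : EReal) else ⊥) q
      rw [if_pos hq2] at hterm
      have hSq : S < E.gg x ((q : ℝ) : EReal) := by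
        rw [← hgs]; exact E.gg_lt x hq1
      exact absurd (lt_of_lt_of_le hSq hterm) (lt_irrefl _)
    · apply iSup_le
      intro q
      by_cases hq : ((q : ℝ) : EReal) < t
      · rw [if_pos hq]; exact E.gg_mono x hq.le
      · rw [if_neg hq]; exact bot_le
  have hlsc : ∀ q : ℚ, LowerSemicontinuous (fun p : X × EReal =>
      if ((q : ℝ) : EReal) < p.2 then E.gg p.1 ((q : ℝ) : EReal) else ⊥) := by
    rintro q ⟨x, t⟩ c hc
    by_cases hq : ((q : ℝ) : EReal) < t
    · simp only [if_pos hq] at hc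
      have h1 : {x' | c < E.gg x' ((q : ℝ) : EReal)} ∈ 𝓝 x :=
        eventually_iff.1 (E.gg_const_lsc ((q : ℝ) : EReal) x c hc)
      have h2 : {t' : EReal | ((q : ℝ) : EReal) < t'} ∈ 𝓝 t := isOpen_Ioi.mem_nhds hq
      rw [nhds_prod_eq]
      filter_upwards [Filter.prod_mem_prod h1 h2] with p hp
      have h2' : ((q : ℝ) : EReal) < p.2 := hp.2
      rw [if_pos h2']
      exact hp.1
    · simp only [if_neg hq] at hc
      exact absurd hc not_lt_bot
  have heq : (fun p : X × EReal => E.gg p.1 p.2) =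
      fun p : X × EReal => ⨆ q : ℚ, if ((q : ℝ) : EReal) < p.2 then E.gg p.1 ((q : ℝ) : EReal) else ⊥ :=
    funext key
  rw [heq]
  exact lowerSemicontinuous_iSup hlsc

lemma lsc_comp_continuous {Z W : Type*} [TopologicalSpace Z] [TopologicalSpace W]
    {f : W → EReal} (hf : LowerSemicontinuous f) {k : Z → W} (hk : Continuous k) :
    LowerSemicontinuous fun z => f (k z) := by
  intro z c hc
  exact (hk.tendsto z).eventually (hf (k z) c hc)

end

end Stmt11Aux

theorem stmt11 {X Y : Type*} [TopologicalSpace X] [TopologicalSpace Y]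
    [T2Space X] [T2Space Y]
    (J : (Y → EReal) → (X → EReal)) (J' : (X → EReal) → (Y → EReal))
    -- J is an order isomorphism between the lsc functions on Y and those on X
    (hJF : ∀ f : Y → EReal, LowerSemicontinuous f → LowerSemicontinuous (J f))
    (hJ'G : ∀ h : X → EReal, LowerSemicontinuous h → LowerSemicontinuous (J' h))
    (hJJ' : ∀ f : Y → EReal, LowerSemicontinuous f → J' (J f) = f)
    (hJ'J : ∀ h : X → EReal, LowerSemicontinuous h → J (J' h) = h)
    (hmono : ∀ f g : Y → EReal, LowerSemicontinuous f → LowerSemicontinuous g →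
      f ≤ g → J f ≤ J g)
    (hmono' : ∀ f g : X → EReal, LowerSemicontinuous f → LowerSemicontinuous g →
      f ≤ g → J' f ≤ J' g) :
    ∃ (φ : X ≃ₜ Y) (g g1 : X → EReal → EReal),
      LowerSemicontinuous (fun p : X × EReal => g p.1 p.2) ∧
      LowerSemicontinuous (fun p : X × EReal => g1 p.1 p.2) ∧
      (∀ x, Monotone (g x) ∧ Function.Bijective (g x)) ∧
      (∀ x t, g1 x (g x t) = t ∧ g x (g1 x t) = t) ∧
      ∀ f : Y → EReal, LowerSemicontinuous f → ∀ x, J f x = g x (f (φ x)) := by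
  classical
  set E : Stmt11Aux.OI X Y := ⟨J, J', hJF, hJ'G, hJJ', hJ'J, hmono, hmono'⟩ with hE
  refine ⟨⟨⟨E.symm.pt, E.pt, fun x => E.symm.pt_pt x, fun y => E.pt_pt y⟩,
    E.symm.pt_continuous, E.pt_continuous⟩,
    E.gg, fun x => E.symm.gg (E.symm.pt x), E.gg_joint_lsc, ?_, ?_, ?_, ?_⟩
  · have h := Stmt11Aux.lsc_comp_continuous (f := fun p : Y × EReal => E.symm.gg p.1 p.2)
      E.symm.gg_joint_lsc
      (k := fun p : X × EReal => (E.symm.pt p.1, p.2))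
      (((E.symm.pt_continuous).comp continuous_fst).prodMk continuous_snd)
    exact h
  · intro x
    refine ⟨E.gg_mono x, Function.bijective_iff_has_inverse.2
      ⟨E.symm.gg (E.symm.pt x), E.gg_left_inv x, E.gg_right_inv x⟩⟩
  · intro x t
    exact ⟨E.gg_left_inv x t, E.gg_right_inv x t⟩
  · intro f hf x
    exact E.formula hf x
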